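/- Let K be a differential field of characteristic zero and K(t) a differential extension with t transcendental over K and t′ ∈ K. If f ∈ K(t) is t-proper (the degree in t of its numerator is strictly less than that of its denominator), then f′ is also t-proper. -/

import Mathlib

open Polynomial

section aux
variable {F : Type*} [Field F]

lemma dzero (δ : F → F) (hδadd : ∀ a b : F, δ (a + b) = δ a + δ b) : δ 0 = 0 := by
  have h := hδadd 0 0
  rw [add_zero] at h
  exact (left_eq_add.mp h)

lemma done (δ : F → F) (hδmul : ∀ a b : F, δ (a * b) = δ a * b + a * δ b) : δ 1 = 0 := by
  have h := hδmul 1 1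
  rw [mul_one, one_mul, mul_one] at h
  exact (left_eq_add.mp h)

lemma dpow (δ : F → F)
    (hδmul : ∀ a b : F, δ (a * b) = δ a * b + a * δ b) (x : F) :
    ∀ n : ℕ, δ (x ^ n) = n * x ^ (n - 1) * δ x := by
  intro n
  induction n with
  | zero => simp [done δ hδmul]
  | succ n ih =>
    rw [pow_succ, hδmul, ih]
    rcases Nat.eq_zero_or_pos n with h | h
    · subst h; simp
    · have h1 : (n : F) * x ^ (n - 1) * δ x * x = n * x ^ n * δ x := by
        have : x ^ (n - 1) * x = x ^ n := by
          rw [← pow_succ]; congr 1; omega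
        calc (n : F) * x ^ (n - 1) * δ x * x = n * (x ^ (n-1) * x) * δ x := by ring
          _ = n * x ^ n * δ x := by rw [this]
      rw [h1, Nat.add_sub_cancel]
      push_cast
      ring

def δK (δ : F → F) (K : Subfield F) (hK : ∀ a ∈ K, δ a ∈ K) : ↥K → ↥K :=
  fun a => ⟨δ a.1, hK a.1 a.2⟩

lemma δK_zero (δ : F → F) (hδadd : ∀ a b : F, δ (a + b) = δ a + δ b)
    (K : Subfield F) (hK : ∀ a ∈ K, δ a ∈ K) : δK δ K hK 0 = 0 :=
  Subtype.ext (dzero δ hδadd)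

noncomputable def Emap (δ : F → F) (hδadd : ∀ a b : F, δ (a + b) = δ a + δ b)
    (K : Subfield F) (hK : ∀ a ∈ K, δ a ∈ K) (p : Polynomial ↥K) : Polynomial ↥K :=
  ⟨AddMonoidAlgebra.ofCoeff (Finsupp.mapRange (δK δ K hK) (δK_zero δ hδadd K hK) p.toFinsupp.coeff)⟩

lemma coeff_Emap (δ : F → F) (hδadd : ∀ a b : F, δ (a + b) = δ a + δ b)
    (K : Subfield F) (hK : ∀ a ∈ K, δ a ∈ K) (p : Polynomial ↥K) (n : ℕ) :
    (Emap δ hδadd K hK p).coeff n = δK δ K hK (p.coeff n) := rfl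

lemma degree_Emap_le (δ : F → F) (hδadd : ∀ a b : F, δ (a + b) = δ a + δ b)
    (K : Subfield F) (hK : ∀ a ∈ K, δ a ∈ K) (p : Polynomial ↥K) :
    (Emap δ hδadd K hK p).degree ≤ p.degree := by
  rw [Polynomial.degree_le_iff_coeff_zero]
  intro m hm
  rw [coeff_Emap, Polynomial.coeff_eq_zero_of_degree_lt hm, δK_zero δ hδadd K hK]

end aux

section eval
variable {F : Type*} [Field F]

lemma Emap_monomial (δ : F → F) (hδadd : ∀ a b : F, δ (a + b) = δ a + δ b)
    (K : Subfield F) (hK : ∀ a ∈ K, δ a ∈ K) (n : ℕ) (a : ↥K) :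
    Emap δ hδadd K hK (monomial n a) = monomial n (δK δ K hK a) := by
  apply Polynomial.ext
  intro m
  rw [coeff_Emap, Polynomial.coeff_monomial, Polynomial.coeff_monomial]
  split
  · rfl
  · exact δK_zero δ hδadd K hK

lemma aeval_Emap (δ : F → F) (hδadd : ∀ a b : F, δ (a + b) = δ a + δ b)
    (hδmul : ∀ a b : F, δ (a * b) = δ a * b + a * δ b)
    (K : Subfield F) (hK : ∀ a ∈ K, δ a ∈ K) (t : F) (p : Polynomial ↥K) :
    δ (Polynomial.aeval t p) =
      Polynomial.aeval t (Emap δ hδadd K hK p) + δ t * Polynomial.aeval t (derivative p) := by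
  induction p using Polynomial.induction_on' with
  | add p q hp hq =>
    have hE : Emap δ hδadd K hK (p + q) = Emap δ hδadd K hK p + Emap δ hδadd K hK q := by
      apply Polynomial.ext
      intro m
      rw [Polynomial.coeff_add, coeff_Emap, coeff_Emap, coeff_Emap, Polynomial.coeff_add]
      exact Subtype.ext (hδadd _ _)
    rw [map_add, hδadd, hp, hq, hE, map_add, derivative_add, map_add]
    ring
  | monomial n a =>
    rw [Emap_monomial, Polynomial.derivative_monomial, Polynomial.aeval_monomial,
      Polynomial.aeval_monomial, Polynomial.aeval_monomial, hδmul,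
      dpow δ hδmul t n]
    have h1 : (algebraMap ↥K F) (δK δ K hK a) = δ ((algebraMap ↥K F) a) := rfl
    have h2 : (algebraMap ↥K F) (a * n) = (algebraMap ↥K F) a * n := by
      push_cast [map_mul]; norm_num
    rw [h1, h2]
    ring

end eval

/-- Let `K` be a differential field of characteristic zero inside a differential
field extension with `t` transcendental over `K` and `t′ ∈ K`.  If `f ∈ K(t)`
is `t`-proper (it can be written as `p(t)/q(t)` with `deg p < deg q`), then
`f′` is also `t`-proper. -/
theorem derivative_of_proper_is_proper (F : Type*) [Field F] [CharZero F]
    (δ : F → F)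
    (hδadd : ∀ a b : F, δ (a + b) = δ a + δ b)
    (hδmul : ∀ a b : F, δ (a * b) = δ a * b + a * δ b)
    (K : Subfield F) (hK : ∀ a ∈ K, δ a ∈ K)
    (t : F) (htr : Transcendental ↥K t) (ht : δ t ∈ K)
    (f : F)
    (hf : ∃ p q : Polynomial ↥K, q ≠ 0 ∧ p.degree < q.degree ∧
      f = Polynomial.aeval t p / Polynomial.aeval t q) :
    ∃ p₁ q₁ : Polynomial ↥K, q₁ ≠ 0 ∧ p₁.degree < q₁.degree ∧
      δ f = Polynomial.aeval t p₁ / Polynomial.aeval t q₁ := by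
  
  obtain ⟨P, Q, hQ, hdeg, hfeq⟩ := hf
  set c : ↥K := ⟨δ t, ht⟩ with hc
  set DP : Polynomial ↥K := Emap δ hδadd K hK P + C c * derivative P with hDP
  set DQ : Polynomial ↥K := Emap δ hδadd K hK Q + C c * derivative Q with hDQ
  have hDle : ∀ p : Polynomial ↥K,
      (Emap δ hδadd K hK p + C c * derivative p).degree ≤ p.degree := by
    intro p
    refine (Polynomial.degree_add_le _ _).trans (max_le (degree_Emap_le δ hδadd K hK p) ?_)
    refine (Polynomial.degree_mul_le _ _).trans ?_
    calc (C c).degree + (derivative p).degree ≤ 0 + (derivative p).degree :=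
          add_le_add_left Polynomial.degree_C_le _
      _ = (derivative p).degree := zero_add _
      _ ≤ p.degree := Polynomial.degree_derivative_le
  have haevalD : ∀ p : Polynomial ↥K,
      δ (Polynomial.aeval t p) =
        Polynomial.aeval t (Emap δ hδadd K hK p + C c * derivative p) := by
    intro p
    rw [map_add, map_mul, Polynomial.aeval_C]
    have : (algebraMap ↥K F) c = δ t := rfl
    rw [this, aeval_Emap δ hδadd hδmul K hK t p]
  set a := Polynomial.aeval t P with ha
  set b := Polynomial.aeval t Q with hb
  have hbne : b ≠ 0 := by
    intro h
    exact hQ (transcendental_iff.mp htr Q h)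
  have hfb : f * b = a := by
    rw [hfeq]
    field_simp
  have h1 : δ a = δ f * b + f * δ b := by rw [← hfb, hδmul]
  have h2 : δ a * b - a * δ b = δ f * (b * b) := by rw [h1, ← hfb]; ring
  have hδf : δ f = (δ a * b - a * δ b) / (b * b) := by
    rw [h2, mul_div_assoc, div_self (mul_ne_zero hbne hbne), mul_one]
  refine ⟨DP * Q - P * DQ, Q * Q, mul_ne_zero hQ hQ, ?_, ?_⟩
  · have hQbot : Q.degree ≠ ⊥ := by
      rw [Polynomial.degree_eq_natDegree hQ]; exact WithBot.coe_ne_bot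
    rw [Polynomial.degree_mul]
    refine (Polynomial.degree_sub_le _ _).trans_lt (max_lt ?_ ?_)
    · refine (Polynomial.degree_mul_le _ _).trans_lt ?_
      exact WithBot.add_lt_add_right hQbot ((hDle P).trans_lt hdeg)
    · refine (Polynomial.degree_mul_le _ _).trans_lt ?_
      calc P.degree + DQ.degree ≤ P.degree + Q.degree := add_le_add_right (hDle Q) _
        _ < Q.degree + Q.degree := WithBot.add_lt_add_right hQbot hdeg
  · rw [hδf, map_sub, map_mul, map_mul, map_mul, ← haevalD P, ← haevalD Q, ← ha, ← hb]
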